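/- In the uniform random recursive tree after n steps, the expected size of level k satisfies E|L_n(k)| ~ (log n)^k / k! as n → ∞, for each fixed k ≥ 1. -/

import Mathlib

open MeasureTheory ProbabilityTheory Filter

/-- Depth (level) of a vertex in the recursive tree with parent function `f`
(vertex `j ≥ 1` has parent `f j`, intended to satisfy `f j < j`). -/
def treeDepth (f : ℕ → ℕ) : ℕ → ℕ
  | 0 => 0
  | n + 1 => treeDepth f (min (f (n + 1)) n) + 1
  decreasing_by exact Nat.lt_succ_of_le (min_le_right _ _)

/-- Degree of vertex `i` in the recursive tree on vertices `0, …, n` with parent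
function `f`: the number of children of `i` plus one for the edge to the parent
of `i` when `i ≠ 0`. -/
def treeDeg (f : ℕ → ℕ) (n i : ℕ) : ℕ :=
  ((Finset.Icc (i + 1) n).filter fun j => f j = i).card + (if i = 0 then 0 else 1)

/-- The set of vertices at distance `k` from the root among vertices `0, …, n`. -/
def level (f : ℕ → ℕ) (n k : ℕ) : Finset ℕ :=
  (Finset.range (n + 1)).filter fun i => treeDepth f i = k

/-- ancestor set -/
def anc (f : ℕ → ℕ) : ℕ → Finset ℕ
  | 0 => ∅
  | n + 1 => insert (n + 1) (anc f (min (f (n + 1)) n))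
  decreasing_by exact Nat.lt_succ_of_le (min_le_right _ _)

def prevEl (s : Finset ℕ) (j : ℕ) : ℕ :=
  WithBot.unbotD 0 (((insert 0 s).filter (· < j)).max)

def isChain (f : ℕ → ℕ) (s : Finset ℕ) : Prop := ∀ j ∈ s, f j = prevEl s j

lemma anc_subset (f : ℕ → ℕ) : ∀ i, anc f i ⊆ Finset.Icc 1 i := by
  intro i
  induction i using Nat.strong_induction_on with
  | _ i ih =>
    match i with
    | 0 => simp [anc]
    | n + 1 =>
      rw [anc]
      intro x hx
      rcases Finset.mem_insert.1 hx with h | h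
      · simp [h]
      · have := ih (min (f (n+1)) n) (Nat.lt_succ_of_le (min_le_right _ _)) h
        simp only [Finset.mem_Icc] at this ⊢
        exact ⟨this.1, this.2.trans (Nat.le_succ_of_le (min_le_right _ _))⟩

lemma card_anc (f : ℕ → ℕ) : ∀ i, (anc f i).card = treeDepth f i := by
  intro i
  induction i using Nat.strong_induction_on with
  | _ i ih =>
    match i with
    | 0 => simp [anc, treeDepth]
    | n + 1 =>
      rw [anc, treeDepth]
      have hnot : (n + 1) ∉ anc f (min (f (n+1)) n) := by
        intro h
        have := anc_subset f _ h
        simp only [Finset.mem_Icc] at this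
        omega
      rw [Finset.card_insert_of_notMem hnot, ih _ (Nat.lt_succ_of_le (min_le_right _ _))]

lemma mem_anc_self (f : ℕ → ℕ) (i : ℕ) (hi : 1 ≤ i) : i ∈ anc f i := by
  match i, hi with
  | n + 1, _ => rw [anc]; exact Finset.mem_insert_self _ _

lemma max_unbot'_eq {s : Finset ℕ} {a : ℕ} (ha : a ∈ s) (h : ∀ b ∈ s, b ≤ a) :
    WithBot.unbotD 0 s.max = a := by
  have : s.max = (a : WithBot ℕ) :=
    le_antisymm (Finset.max_le fun b hb => WithBot.coe_le_coe.mpr (h b hb)) (Finset.le_max ha)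
  rw [this]; rfl

lemma prevEl_insert_of_le {s : Finset ℕ} {i j : ℕ} (h : j ≤ i) :
    prevEl (insert i s) j = prevEl s j := by
  unfold prevEl
  rw [Finset.insert_comm, Finset.filter_insert, if_neg (by omega)]

lemma anc_succ (f : ℕ → ℕ) {i : ℕ} (h1 : 1 ≤ i) (h2 : f i < i) :
    anc f i = insert i (anc f (f i)) := by
  match i, h1 with
  | n + 1, _ =>
    rw [anc, min_eq_left (by omega)]

lemma prevEl_top (f : ℕ → ℕ) {p i : ℕ} (h : p < i) :
    prevEl (insert i (anc f p)) i = p := by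
  rw [prevEl_insert_of_le le_rfl]
  unfold prevEl
  have hfilter : (insert 0 (anc f p)).filter (· < i) = insert 0 (anc f p) := by
    apply Finset.filter_true_of_mem
    intro x hx
    rcases Finset.mem_insert.1 hx with rfl | hx
    · omega
    · have := anc_subset f p hx; simp only [Finset.mem_Icc] at this; omega
  rw [hfilter]
  apply max_unbot'_eq
  · rcases Nat.eq_zero_or_pos p with rfl | hp
    · exact Finset.mem_insert_self _ _
    · exact Finset.mem_insert_of_mem (mem_anc_self f p hp)
  · intro b hb
    rcases Finset.mem_insert.1 hb with rfl | hb
    · omega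
    · have := anc_subset f p hb; simp only [Finset.mem_Icc] at this; omega

lemma isChain_anc (f : ℕ → ℕ) (hf : ∀ j, 1 ≤ j → f j < j) :
    ∀ i, isChain f (anc f i) := by
  intro i
  induction i using Nat.strong_induction_on with
  | _ i ih =>
    match i with
    | 0 => intro j hj; simp [anc] at hj
    | n + 1 =>
      have hflt : f (n+1) < n + 1 := hf _ (by omega)
      rw [anc_succ f (by omega) hflt]
      intro j hj
      rcases Finset.mem_insert.1 hj with rfl | hj
      · rw [prevEl_top f hflt]
      · have hjle : j ≤ f (n+1) := by
          have := anc_subset f _ hj; simp only [Finset.mem_Icc] at this; omega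
        rw [prevEl_insert_of_le (by omega)]
        exact ih (f (n+1)) hflt j hj

lemma chain_eq_anc (f : ℕ → ℕ) (hf : ∀ j, 1 ≤ j → f j < j) :
    ∀ i, ∀ s : Finset ℕ, isChain f s → 0 ∉ s → ∀ hne : s.Nonempty, s.max' hne = i →
      s = anc f i := by
  intro i
  induction i using Nat.strong_induction_on with
  | _ i ih =>
    intro s hchain h0 hne hmax
    have hi_mem : i ∈ s := hmax ▸ s.max'_mem hne
    have hi1 : 1 ≤ i := by rcases Nat.eq_zero_or_pos i with rfl | h; exact absurd hi_mem h0; exact h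
    have hle : ∀ b ∈ s, b ≤ i := fun b hb => hmax ▸ s.le_max' b hb
    set s' := s.erase i with hs'
    have hins : insert i s' = s := Finset.insert_erase hi_mem
    have hfilter : (insert 0 s).filter (· < i) = insert 0 s' := by
      ext x
      simp only [Finset.mem_filter, Finset.mem_insert, Finset.mem_erase, hs']
      constructor
      · rintro ⟨rfl | hx, hlt⟩
        · exact Or.inl rfl
        · exact Or.inr ⟨by omega, hx⟩
      · rintro (rfl | ⟨hx, hxs⟩)
        · exact ⟨Or.inl rfl, by omega⟩
        · exact ⟨Or.inr hxs, lt_of_le_of_ne (hle x hxs) hx⟩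
    have hfi : f i = prevEl s i := hchain i hi_mem
    rw [prevEl, hfilter] at hfi
    rcases Finset.eq_empty_or_nonempty s' with hemp | hne'
    · have hfi0 : f i = 0 := by rw [hemp] at hfi; simpa using hfi
      have hs_single : s = {i} := by
        rw [← hins, hemp]; rfl
      rw [anc_succ f hi1 (hf i hi1), hfi0]
      rw [hs_single]
      simp [anc]
    · have hmax' : f i = s'.max' hne' := by
        rw [hfi]
        apply max_unbot'_eq
        · exact Finset.mem_insert_of_mem (s'.max'_mem hne')
        · intro b hb
          rcases Finset.mem_insert.1 hb with rfl | hb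
          · omega
          · exact s'.le_max' b hb
      have hmaxlt : s'.max' hne' < i := by
        have h1 := s'.max'_mem hne'
        have h2 : s'.max' hne' ≠ i := (Finset.mem_erase.1 h1).1
        have := hle _ (Finset.mem_erase.1 h1).2
        omega
      have hchain' : isChain f s' := by
        intro j hj
        have hji : j ≤ i := hle j (Finset.mem_erase.1 hj).2
        have := hchain j (Finset.mem_erase.1 hj).2
        rw [this, ← hins, prevEl_insert_of_le hji]
      have h0' : 0 ∉ s' := fun h => h0 (Finset.mem_erase.1 h).2
      have hrec : s' = anc f (s'.max' hne') :=
        ih _ (by omega) s' hchain' h0' hne' rfl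
      rw [anc_succ f hi1 (hf i hi1), ← hins, hmax', ← hrec]

instance (f : ℕ → ℕ) : DecidablePred (isChain f) := fun s =>
  inferInstanceAs (Decidable (∀ j ∈ s, f j = prevEl s j))

lemma treeDepth_zero (f : ℕ → ℕ) : treeDepth f 0 = 0 := by rw [treeDepth]

lemma max'_anc (f : ℕ → ℕ) (i : ℕ) (hi : 1 ≤ i) (hne : (anc f i).Nonempty) :
    (anc f i).max' hne = i := by
  apply le_antisymm
  · apply Finset.max'_le
    intro y hy
    have := anc_subset f i hy; simp only [Finset.mem_Icc] at this; omega
  · exact Finset.le_max' _ i (mem_anc_self f i hi)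

lemma level_card_eq (f : ℕ → ℕ) (hf : ∀ j, 1 ≤ j → f j < j) (n k : ℕ) (hk : 1 ≤ k) :
    (level f n k).card = (((Finset.Icc 1 n).powersetCard k).filter (isChain f)).card := by
  symm
  apply Finset.card_bij (fun (s : Finset ℕ) hs =>
    s.max' (Finset.card_pos.1 (by
      rcases Finset.mem_filter.1 hs with ⟨hs1, _⟩
      rw [(Finset.mem_powersetCard.1 hs1).2]; omega)))
  · -- maps into level
    intro s hs
    rcases Finset.mem_filter.1 hs with ⟨hs1, hchain⟩
    rcases Finset.mem_powersetCard.1 hs1 with ⟨hsub, hcard⟩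
    have hne : s.Nonempty := Finset.card_pos.1 (by rw [hcard]; omega)
    set i := s.max' hne with hidef
    have h0 : 0 ∉ s := fun h => by have := hsub h; simp at this
    have heq : s = anc f i := chain_eq_anc f hf i s hchain h0 hne rfl
    have hi_mem : i ∈ s := s.max'_mem hne
    have hin : i ≤ n := by have := hsub hi_mem; simp only [Finset.mem_Icc] at this; omega
    rw [level, Finset.mem_filter, Finset.mem_range]
    refine ⟨by omega, ?_⟩
    rw [← card_anc f i, ← heq, hcard]
  · -- injective
    intro s hs t ht hmax
    rcases Finset.mem_filter.1 hs with ⟨hs1, hchains⟩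
    rcases Finset.mem_filter.1 ht with ⟨ht1, hchaint⟩
    have h0s : 0 ∉ s := fun h => by
      have := (Finset.mem_powersetCard.1 hs1).1 h; simp at this
    have h0t : 0 ∉ t := fun h => by
      have := (Finset.mem_powersetCard.1 ht1).1 h; simp at this
    rw [chain_eq_anc f hf _ s hchains h0s (Finset.card_pos.1 (by rw [(Finset.mem_powersetCard.1 hs1).2]; omega)) rfl, hmax]
    exact (chain_eq_anc f hf _ t hchaint h0t _ rfl).symm
  · -- surjective
    intro i hi
    rcases Finset.mem_filter.1 hi with ⟨hir, hdepth⟩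
    have hi1 : 1 ≤ i := by
      rcases Nat.eq_zero_or_pos i with rfl | h
      · rw [treeDepth_zero] at hdepth; omega
      · exact h
    have hin : i ≤ n := by have := Finset.mem_range.1 hir; omega
    have hcard : (anc f i).card = k := by rw [card_anc, hdepth]
    have hne : (anc f i).Nonempty := Finset.card_pos.1 (by omega)
    refine ⟨anc f i, ?_, ?_⟩
    · rw [Finset.mem_filter, Finset.mem_powersetCard]
      exact ⟨⟨(anc_subset f i).trans (Finset.Icc_subset_Icc_right hin), hcard⟩, isChain_anc f hf i⟩
    · exact max'_anc f i hi1 _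

lemma prevEl_lt (s : Finset ℕ) (j : ℕ) (hj : 0 < j) : prevEl s j < j := by
  unfold prevEl
  rcases h : ((insert 0 s).filter (· < j)).max with _ | a
  · exact hj
  · have := Finset.mem_of_max h
    simp only [Finset.mem_filter] at this
    exact this.2

section Prob
variable {Ω : Type*} [MeasurableSpace Ω] (μ : Measure Ω) [IsProbabilityMeasure μ]
    (F : ℕ → Ω → ℕ)

lemma chain_event_eq (s : Finset ℕ) :
    {ω | isChain (fun j => F j ω) s} = ⋂ j ∈ s, F j ⁻¹' {prevEl s j} := by
  ext ω
  simp only [Set.mem_setOf_eq, Set.mem_iInter, Set.mem_preimage, Set.mem_singleton_iff]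
  rfl

lemma chain_event_measurable (hmeas : ∀ j, Measurable (F j)) (s : Finset ℕ) :
    MeasurableSet {ω | isChain (fun j => F j ω) s} := by
  rw [chain_event_eq]
  exact MeasurableSet.biInter s.countable_toSet
    (fun j _ => hmeas j (measurableSet_singleton _))

lemma meas_chain_event
    (hunif : ∀ j, 1 ≤ j → ∀ m, m < j → μ {ω | F j ω = m} = ENNReal.ofReal (1 / j))
    (hindep : iIndepFun F μ)
    {n : ℕ} {s : Finset ℕ} (hs : s ⊆ Finset.Icc 1 n) :
    μ {ω | isChain (fun j => F j ω) s} = ∏ j ∈ s, ENNReal.ofReal (1 / (j:ℝ)) := by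
  rw [chain_event_eq,
    hindep.measure_inter_preimage_eq_mul s (sets := fun j => {prevEl s j})
      (fun i _ => measurableSet_singleton _)]
  apply Finset.prod_congr rfl
  intro j hj
  have hj1 : 1 ≤ j := by have := hs hj; simp only [Finset.mem_Icc] at this; omega
  have := hunif j hj1 (prevEl s j) (prevEl_lt s j hj1)
  exact this

lemma integral_level_card
    (hmeas : ∀ j, Measurable (F j))
    (hlt : ∀ j, 1 ≤ j → ∀ ω, F j ω < j)
    (hunif : ∀ j, 1 ≤ j → ∀ m, m < j → μ {ω | F j ω = m} = ENNReal.ofReal (1 / j))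
    (hindep : iIndepFun F μ)
    (n k : ℕ) (hk : 1 ≤ k) :
    ∫ ω, ((level (fun j => F j ω) n k).card : ℝ) ∂μ
      = ∑ s ∈ (Finset.Icc 1 n).powersetCard k, ∏ j ∈ s, (1 / (j:ℝ)) := by
  have hfun : ∀ ω, ((level (fun j => F j ω) n k).card : ℝ)
      = ∑ s ∈ (Finset.Icc 1 n).powersetCard k,
          Set.indicator {ω' | isChain (fun j => F j ω') s} (fun _ => (1:ℝ)) ω := by
    intro ω
    rw [level_card_eq _ (fun j hj => hlt j hj ω) n k hk, Finset.card_filter]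
    push_cast
    apply Finset.sum_congr rfl
    intro s _
    rw [Set.indicator_apply]
    congr 1
  rw [MeasureTheory.integral_congr_ae (Filter.Eventually.of_forall hfun),
    MeasureTheory.integral_finset_sum]
  · apply Finset.sum_congr rfl
    intro s hs
    rw [MeasureTheory.integral_indicator_const (1:ℝ) (chain_event_measurable F hmeas s),
      measureReal_def, meas_chain_event μ F hunif hindep (Finset.mem_powersetCard.1 hs).1]
    rw [smul_eq_mul, mul_one, ENNReal.toReal_prod]
    apply Finset.prod_congr rfl
    intro j _
    rw [ENNReal.toReal_ofReal (by positivity)]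
  · intro s _
    exact (MeasureTheory.integrable_const (1:ℝ)).indicator (chain_event_measurable F hmeas s)
end Prob

noncomputable def Tnk (n k : ℕ) : ℝ :=
  ∑ s ∈ (Finset.Icc 1 n).powersetCard k, ∏ j ∈ s, (1 / (j:ℝ))

noncomputable def harm (n : ℕ) : ℝ := ∑ j ∈ Finset.Icc 1 n, (1 / (j:ℝ))

lemma harm_nonneg (n : ℕ) : 0 ≤ harm n :=
  Finset.sum_nonneg fun j _ => by positivity

lemma Icc_succ_insert (n : ℕ) : Finset.Icc 1 (n+1) = insert (n+1) (Finset.Icc 1 n) := by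
  ext x; simp only [Finset.mem_Icc, Finset.mem_insert]; omega

lemma not_mem_Icc_succ (n : ℕ) : (n+1) ∉ Finset.Icc 1 n := by simp

lemma harm_succ (n : ℕ) : harm (n+1) = harm n + 1 / (n+1) := by
  rw [harm, Icc_succ_insert, Finset.sum_insert (not_mem_Icc_succ n)]
  rw [harm]; push_cast; ring

lemma Tnk_zero (n : ℕ) : Tnk n 0 = 1 := by
  rw [Tnk, Finset.powersetCard_zero, Finset.sum_singleton, Finset.prod_empty]

lemma Tnk_zero_succ (k : ℕ) : Tnk 0 (k+1) = 0 := by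
  rw [Tnk]
  have : Finset.Icc 1 0 = (∅ : Finset ℕ) := by simp
  rw [this, Finset.powersetCard_eq_empty.2 (by simp), Finset.sum_empty]

lemma Tnk_succ (n k : ℕ) : Tnk (n+1) (k+1) = Tnk n (k+1) + (1/(n+1:ℝ)) * Tnk n k := by
  rw [Tnk, Icc_succ_insert, Finset.powersetCard_succ_insert (not_mem_Icc_succ n),
    Finset.sum_union, Finset.sum_image]
  · rw [Tnk, Tnk, Finset.mul_sum]
    congr 1
    apply Finset.sum_congr rfl
    intro s hs
    have hns : (n+1) ∉ s := fun h => not_mem_Icc_succ n ((Finset.mem_powersetCard.1 hs).1 h)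
    rw [Finset.prod_insert hns]
    push_cast; ring
  · intro u hu v hv h
    have hnu : (n+1) ∉ u := fun hh => not_mem_Icc_succ n ((Finset.mem_powersetCard.1 hu).1 hh)
    have hnv : (n+1) ∉ v := fun hh => not_mem_Icc_succ n ((Finset.mem_powersetCard.1 hv).1 hh)
    have := congrArg (fun t => Finset.erase t (n+1)) h
    simpa [Finset.erase_insert hnu, Finset.erase_insert hnv] using this
  · rw [Finset.disjoint_left]
    intro t ht htim
    rcases Finset.mem_image.1 htim with ⟨u, _, rfl⟩
    have : (n+1) ∈ insert (n+1) u := Finset.mem_insert_self _ _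
    exact not_mem_Icc_succ n ((Finset.mem_powersetCard.1 ht).1 this)

lemma pow_sub_pow_le {a b c : ℝ} (hb : 0 ≤ b) (hba : b ≤ a) (hac : a ≤ c) (k : ℕ) :
    a ^ k - b ^ k ≤ k * (a - b) * c ^ (k - 1) := by
  rw [← geom_sum₂_mul a b k]
  have hsum : (∑ i ∈ Finset.range k, a ^ i * b ^ (k - 1 - i)) ≤ k * c ^ (k-1) := by
    calc (∑ i ∈ Finset.range k, a ^ i * b ^ (k - 1 - i))
        ≤ ∑ _i ∈ Finset.range k, c ^ (k-1) := by
          apply Finset.sum_le_sum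
          intro i hi
          have hik : i ≤ k - 1 := by have := Finset.mem_range.1 hi; omega
          calc a ^ i * b ^ (k-1-i) ≤ c ^ i * c ^ (k-1-i) := by
                have h0a : 0 ≤ a := hb.trans hba
                have h0c : 0 ≤ c := h0a.trans hac
                apply mul_le_mul (pow_le_pow_left₀ h0a hac i)
                  (pow_le_pow_left₀ hb (hba.trans hac) _) (by positivity) (by positivity)
            _ = c ^ (k-1) := by rw [← pow_add]; congr 1; omega
      _ = k * c ^ (k-1) := by rw [Finset.sum_const, Finset.card_range, nsmul_eq_mul]
  calc (∑ i ∈ Finset.range k, a ^ i * b ^ (k - 1 - i)) * (a - b)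
      ≤ (k * c ^ (k-1)) * (a - b) := by
        apply mul_le_mul_of_nonneg_right hsum (by linarith)
    _ = k * (a - b) * c ^ (k-1) := by ring

lemma le_pow_sub_pow {a b : ℝ} (hb : 0 ≤ b) (hba : b ≤ a) (k : ℕ) :
    k * b ^ (k-1) * (a - b) ≤ a ^ k - b ^ k := by
  rw [← geom_sum₂_mul a b k]
  have hsum : (k:ℝ) * b ^ (k-1) ≤ ∑ i ∈ Finset.range k, a ^ i * b ^ (k - 1 - i) := by
    calc (k:ℝ) * b ^ (k-1) = ∑ _i ∈ Finset.range k, b ^ (k-1) := by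
          rw [Finset.sum_const, Finset.card_range, nsmul_eq_mul]
      _ ≤ _ := by
          apply Finset.sum_le_sum
          intro i hi
          have hik : i ≤ k - 1 := by have := Finset.mem_range.1 hi; omega
          calc b ^ (k-1) = b ^ i * b ^ (k-1-i) := by rw [← pow_add]; congr 1; omega
            _ ≤ a ^ i * b ^ (k-1-i) := by
                apply mul_le_mul_of_nonneg_right (pow_le_pow_left₀ hb hba i) (by positivity)
  exact mul_le_mul_of_nonneg_right hsum (by linarith)

lemma Tnk_upper : ∀ n k, (Nat.factorial k : ℝ) * Tnk n k ≤ harm n ^ k := by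
  intro n
  induction n with
  | zero =>
    intro k
    have h0 : harm 0 = 0 := by simp [harm]
    cases k with
    | zero => simp [Tnk_zero]
    | succ s => rw [Tnk_zero_succ, h0]; simp
  | succ n ih =>
    intro k
    cases k with
    | zero => simp [Tnk_zero]
    | succ s =>
      set h := harm n with hh
      set x := (1:ℝ)/(n+1) with hx
      have hx0 : 0 ≤ x := by positivity
      have hh0 : 0 ≤ h := harm_nonneg n
      rw [Tnk_succ, harm_succ]
      have h1 : (Nat.factorial (s+1) : ℝ) * Tnk n (s+1) ≤ h ^ (s+1) := ih (s+1)
      have h2 : (Nat.factorial s : ℝ) * Tnk n s ≤ h ^ s := ih s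
      have h3 : (s+1 : ℝ) * h ^ s * ((h + x) - h) ≤ (h+x)^(s+1) - h^(s+1) := by
        have := le_pow_sub_pow hh0 (by linarith : h ≤ h + x) (s+1)
        simpa using this
      have hfact : (Nat.factorial (s+1) : ℝ) = (s+1) * Nat.factorial s := by
        rw [Nat.factorial_succ]; push_cast; ring
      have hTnn : 0 ≤ (s+1:ℝ) * x := by positivity
      calc (Nat.factorial (s+1) : ℝ) * (Tnk n (s+1) + x * Tnk n s)
          = (Nat.factorial (s+1) : ℝ) * Tnk n (s+1)
            + (s+1) * x * ((Nat.factorial s : ℝ) * Tnk n s) := by rw [hfact]; ring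
        _ ≤ h^(s+1) + (s+1) * x * h^s := by
            have := mul_le_mul_of_nonneg_left h2 hTnn
            linarith
        _ ≤ (h + x)^(s+1) := by nlinarith [h3]

lemma Tnk_lower : ∀ n k : ℕ, (max (harm n - (k:ℝ)) 0) ^ k ≤ (Nat.factorial k : ℝ) * Tnk n k := by
  intro n
  induction n with
  | zero =>
    intro k
    have h0 : harm 0 = 0 := by simp [harm]
    cases k with
    | zero => simp [Tnk_zero]
    | succ s =>
      rw [Tnk_zero_succ, h0]
      have : max (0 - ((s:ℝ)+1)) 0 = 0 := by
        apply max_eq_right; push_cast; linarith [Nat.cast_nonneg (α := ℝ) s]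
      push_cast
      rw [this]
      simp
  | succ n ih =>
    intro k
    cases k with
    | zero => simp [Tnk_zero]
    | succ s =>
      set h := harm n with hh
      set x := (1:ℝ)/(n+1) with hx
      have hx0 : 0 < x := by positivity
      have hx1 : x ≤ 1 := by
        rw [hx]; rw [div_le_one (by positivity)]; linarith [Nat.cast_nonneg (α := ℝ) n]
      rw [Tnk_succ, harm_succ]
      set a := max (h + x - ((s:ℝ)+1)) 0 with ha
      set b := max (h - ((s:ℝ)+1)) 0 with hb
      set c := max (h - (s:ℝ)) 0 with hc
      have hb0 : 0 ≤ b := le_max_right _ _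
      have hba : b ≤ a := max_le_max (by linarith) le_rfl
      have hac : a ≤ c := max_le_max (by linarith) le_rfl
      have habx : a - b ≤ x := by
        rw [ha, hb]
        rcases le_or_gt (h + x - ((s:ℝ)+1)) 0 with hcase | hcase
        · rw [max_eq_right hcase]; simp [hb0]; linarith
        · rw [max_eq_left (le_of_lt hcase)]
          rcases le_or_gt (h - ((s:ℝ)+1)) 0 with hc2 | hc2
          · rw [max_eq_right hc2]; linarith
          · rw [max_eq_left (le_of_lt hc2)]; linarith
      have hkey : a^(s+1) - b^(s+1) ≤ (s+1) * x * c^s := by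
        have := pow_sub_pow_le hb0 hba hac (s+1)
        simp only [Nat.add_sub_cancel] at this
        have hcpos : 0 ≤ c^s := by positivity
        have h4 : ((s:ℝ)+1) * (a-b) * c^s ≤ ((s:ℝ)+1)*x*c^s :=
          mul_le_mul_of_nonneg_right
            (mul_le_mul_of_nonneg_left habx (by positivity)) hcpos
        push_cast at this
        linarith
      have h1 : b ^ (s+1) ≤ (Nat.factorial (s+1) : ℝ) * Tnk n (s+1) := by
        have := ih (s+1); push_cast at this ⊢; exact this
      have h2 : c ^ s ≤ (Nat.factorial s : ℝ) * Tnk n s := ih s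
      have hfact : (Nat.factorial (s+1) : ℝ) = (s+1) * Nat.factorial s := by
        rw [Nat.factorial_succ]; push_cast; ring
      have goal_eq : max (h + x - ((s:ℝ)+1)) 0 = a := rfl
      push_cast
      rw [goal_eq]
      calc a^(s+1) ≤ b^(s+1) + (s+1) * x * c^s := by linarith
        _ ≤ (Nat.factorial (s+1) : ℝ) * Tnk n (s+1)
            + (s+1) * x * ((Nat.factorial s : ℝ) * Tnk n s) := by
            have := mul_le_mul_of_nonneg_left h2 (by positivity : (0:ℝ) ≤ (s+1) * x)
            linarith
        _ = (Nat.factorial (s+1) : ℝ) * (Tnk n (s+1) + x * Tnk n s) := by rw [hfact]; ring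

lemma log_le_harm : ∀ n : ℕ, Real.log (n+1) ≤ harm n := by
  intro n
  induction n with
  | zero => simp [harm]
  | succ n ih =>
    rw [harm_succ]
    have hstep : Real.log (n+2) - Real.log (n+1) ≤ 1/(n+1:ℝ) := by
      have hpos : (0:ℝ) < (n+2)/(n+1) := by positivity
      have := Real.log_le_sub_one_of_pos hpos
      rw [Real.log_div (by positivity) (by positivity)] at this
      have heq : ((n:ℝ)+2)/((n:ℝ)+1) - 1 = 1/((n:ℝ)+1) := by
        rw [div_sub_one (by positivity)]; ring_nf
      linarith [heq ▸ this]
    push_cast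
    push_cast at ih hstep
    have : ((n:ℝ) + 1 + 1) = (n:ℝ) + 2 := by ring
    rw [this]
    linarith

lemma harm_le_log : ∀ n : ℕ, 1 ≤ n → harm n ≤ 1 + Real.log n := by
  intro n
  induction n with
  | zero => intro h; omega
  | succ n ih =>
    intro _
    rcases Nat.eq_zero_or_pos n with rfl | hn
    · have : harm 1 = 1 := by simp [harm]
      simp [this]
    · have hstep : Real.log n + 1/((n:ℝ)+1) ≤ Real.log (n+1) := by
        have hpos : (0:ℝ) < (n:ℝ)/((n:ℝ)+1) := by
          apply div_pos (by exact_mod_cast hn) (by positivity)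
        have := Real.log_le_sub_one_of_pos hpos
        have hn0 : ((n:ℝ)) ≠ 0 := by
          have : (0:ℝ) < (n:ℝ) := by exact_mod_cast hn
          exact this.ne'
        rw [Real.log_div hn0 (by positivity)] at this
        have heq : (n:ℝ)/((n:ℝ)+1) - 1 = -(1/((n:ℝ)+1)) := by
          rw [div_sub_one (by positivity)]; ring_nf
        linarith [heq ▸ this]
      rw [harm_succ]
      have := ih hn
      push_cast
      push_cast at hstep
      linarith

lemma tendsto_Tnk (k : ℕ) (hk : 1 ≤ k) :
    Tendsto (fun n : ℕ => Tnk n k / ((Real.log n) ^ k / (Nat.factorial k : ℝ)))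
      atTop (nhds 1) := by
  have htop : Tendsto (fun n : ℕ => Real.log n) atTop atTop :=
    Real.tendsto_log_atTop.comp tendsto_natCast_atTop_atTop
  have hinv : Tendsto (fun n : ℕ => (Real.log n)⁻¹) atTop (nhds 0) :=
    htop.inv_tendsto_atTop
  have hl : Tendsto (fun n : ℕ => (1 - k * (Real.log n)⁻¹) ^ k) atTop (nhds 1) := by
    have h1 : Tendsto (fun n : ℕ => 1 - (k:ℝ) * (Real.log n)⁻¹) atTop (nhds 1) := by
      have h2 := (tendsto_const_nhds (α := ℕ) (x := (k:ℝ)) (f := atTop)).mul hinv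
      simpa using (tendsto_const_nhds (α := ℕ) (x := (1:ℝ)) (f := atTop)).sub h2
    simpa using h1.pow k
  have hu : Tendsto (fun n : ℕ => ((Real.log n)⁻¹ + 1) ^ k) atTop (nhds 1) := by
    have h1 : Tendsto (fun n : ℕ => (Real.log n)⁻¹ + 1) atTop (nhds 1) := by
      simpa using hinv.add (tendsto_const_nhds (α := ℕ) (x := (1:ℝ)) (f := atTop))
    simpa using h1.pow k
  apply tendsto_of_tendsto_of_tendsto_of_le_of_le' hl hu
  · filter_upwards [eventually_ge_atTop 1, htop.eventually_ge_atTop ((k:ℝ)+1)] with n hn1 hlog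
    set L := Real.log n with hL
    have hLpos : 0 < L := by
      have : (0:ℝ) ≤ (k:ℝ) := Nat.cast_nonneg k
      linarith
    have hLk : (0:ℝ) ≤ L - k := by linarith
    have hharm : L ≤ harm n := by
      have h1 : L ≤ Real.log (n+1) := by
        apply Real.log_le_log (by exact_mod_cast hn1)
        push_cast; linarith
      linarith [log_le_harm n]
    have hpow : (L - k) ^ k ≤ (Nat.factorial k : ℝ) * Tnk n k := by
      calc (L - k) ^ k ≤ (max (harm n - (k:ℝ)) 0) ^ k := by
            apply pow_le_pow_left₀ hLk
            exact le_trans (by linarith) (le_max_left _ _)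
        _ ≤ _ := Tnk_lower n k
    have heq : (1 - (k:ℝ) * L⁻¹) = (L - k) / L := by
      field_simp
    rw [heq, div_pow, div_div_eq_mul_div, mul_comm]
    gcongr
  · filter_upwards [eventually_ge_atTop 1, htop.eventually_ge_atTop ((k:ℝ)+1)] with n hn1 hlog
    set L := Real.log n with hL
    have hLpos : 0 < L := by
      have : (0:ℝ) ≤ (k:ℝ) := Nat.cast_nonneg k
      linarith
    have hpow : (Nat.factorial k : ℝ) * Tnk n k ≤ (1 + L) ^ k := by
      calc (Nat.factorial k : ℝ) * Tnk n k ≤ harm n ^ k := Tnk_upper n k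
        _ ≤ (1 + L) ^ k := pow_le_pow_left₀ (harm_nonneg n) (harm_le_log n hn1) k
    have heq : (L⁻¹ + 1) = (1 + L) / L := by field_simp
    rw [heq, div_pow, div_div_eq_mul_div, mul_comm]
    gcongr

/-- In the uniform random recursive tree after `n` steps, the expected size of
level `k` is asymptotically `(log n)^k / k!` for each fixed `k ≥ 1`. -/
theorem expected_level_size_asymptotic {Ω : Type*} [MeasurableSpace Ω] (μ : Measure Ω) [IsProbabilityMeasure μ]
    (F : ℕ → Ω → ℕ) (hmeas : ∀ j, Measurable (F j))
    (hlt : ∀ j, 1 ≤ j → ∀ ω, F j ω < j)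
    (hunif : ∀ j, 1 ≤ j → ∀ m, m < j → μ {ω | F j ω = m} = ENNReal.ofReal (1 / j))
    (hindep : iIndepFun F μ) (k : ℕ) (hk : 1 ≤ k) :
    Tendsto (fun n : ℕ =>
        (∫ ω, ((level (fun j => F j ω) n k).card : ℝ) ∂μ) /
          ((Real.log n) ^ k / (Nat.factorial k : ℝ)))
      atTop (nhds 1) := by
  apply (tendsto_Tnk k hk).congr
  intro n
  rw [integral_level_card μ F hmeas hlt hunif hindep n k hk]
  rfl
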